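/- Let τ > 0, a, b ∈ ℝ, and let φ : [−τ, 0] → ℝ be continuously differentiable. Then for every t ≥ 0 the following integration-by-parts identity holds: e^{a(t + τ)} exp_τ(b e^{−aτ}, t) φ(−τ) + ∫_{−τ}^{0} e^{a(t − s)} exp_τ(b e^{−aτ}, t − τ − s) (φ′(s) − a φ(s)) ds = e^{at} exp_τ(b e^{−aτ}, t − τ) φ(0) + b ∫_{−τ}^{0} e^{a(t − s − τ)} exp_τ(b e^{−aτ}, t − 2τ − s) φ(s) ds. -/

import Mathlib

open Real Set

/-- The delayed exponential function: `exp_τ(b, t) = 0` for `t < -τ`, and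
`exp_τ(b, t) = 1 + ∑_{k=1}^{⌊t/τ⌋+1} b^k (t - (k-1)τ)^k / k!` for `t ≥ -τ`. -/
noncomputable def delayedExp (τ b t : ℝ) : ℝ :=
  if t < -τ then 0
  else 1 + ∑ k ∈ Finset.Icc 1 (⌊t / τ⌋ + 1).toNat,
    b ^ k * (t - ((k : ℝ) - 1) * τ) ^ k / (Nat.factorial k)

namespace DEaux


lemma sum_Icc_one (f : ℕ → ℝ) (n : ℕ) :
    ∑ k ∈ Finset.Icc 1 n, f k = ∑ i ∈ Finset.range n, f (i + 1) := by
  rw [Finset.range_eq_Ico, Finset.sum_Ico_add' f 0 n (c := 1)]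
  simp [Finset.Ico_add_one_right_eq_Icc]

noncomputable def P (τ b : ℝ) (m : ℕ) (t : ℝ) : ℝ :=
  1 + ∑ k ∈ Finset.Icc 1 m, b ^ k * (t - ((k : ℝ) - 1) * τ) ^ k / (Nat.factorial k)

lemma delayedExp_neg {τ b t : ℝ} (h : t < -τ) : delayedExp τ b t = 0 := if_pos h

lemma P_zero (τ b t : ℝ) : P τ b 0 t = 1 := by simp [P]

lemma P_succ (τ b : ℝ) (m : ℕ) (t : ℝ) :
    P τ b (m + 1) t = P τ b m t
      + b ^ (m + 1) * (t - (m : ℝ) * τ) ^ (m + 1) / (Nat.factorial (m + 1)) := by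
  simp only [P, sum_Icc_one]
  rw [Finset.sum_range_succ]
  push_cast
  ring

lemma delayedExp_eq_P {τ b : ℝ} (hτ : 0 < τ) (m : ℕ) {t : ℝ}
    (h1 : ((m : ℝ) - 1) * τ ≤ t) (h2 : t ≤ (m : ℝ) * τ) :
    delayedExp τ b t = P τ b m t := by
  have hm0 : (0:ℝ) ≤ (m : ℝ) * τ := by positivity
  have hge : ¬ t < -τ := by push_neg; nlinarith
  rcases eq_or_lt_of_le h2 with heq | hlt
  · have hfl : ⌊t / τ⌋ = (m : ℤ) := by
      rw [heq, mul_div_assoc, div_self hτ.ne', mul_one]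
      exact_mod_cast Int.floor_natCast m
    rw [delayedExp, if_neg hge, hfl]
    have htn : ((m : ℤ) + 1).toNat = m + 1 := by omega
    rw [htn]
    rw [show (1 : ℝ) + ∑ k ∈ Finset.Icc 1 (m+1), b ^ k * (t - ((k : ℝ) - 1) * τ) ^ k / (Nat.factorial k) = P τ b (m+1) t from rfl, P_succ, heq]
    simp
  · have hfl : ⌊t / τ⌋ = (m : ℤ) - 1 := by
      rw [Int.floor_eq_iff]
      constructor
      · push_cast
        rw [le_div_iff₀ hτ]
        linarith
      · push_cast
        rw [div_lt_iff₀ hτ]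
        linarith
    rw [delayedExp, if_neg hge, hfl]
    have htn : ((m : ℤ) - 1 + 1).toNat = m := by omega
    rw [htn]
    rfl

lemma P_hasDerivAt (τ b : ℝ) (m : ℕ) (t : ℝ) :
    HasDerivAt (P τ b (m + 1)) (b * P τ b m (t - τ)) t := by
  have h : ∀ k ∈ Finset.Icc 1 (m+1),
      HasDerivAt (fun t : ℝ => b ^ k * (t - ((k : ℝ) - 1) * τ) ^ k / (Nat.factorial k))
        (b ^ k * ((k : ℝ) * (t - ((k : ℝ) - 1) * τ) ^ (k - 1)) / (Nat.factorial k)) t := by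
    intro k _
    exact ((((hasDerivAt_id t).sub_const (((k : ℝ) - 1) * τ)).pow k).const_mul (b ^ k)).div_const _
      |>.congr_deriv (by simp only [id_eq]; ring)
  have hsum := HasDerivAt.fun_sum h
  have : HasDerivAt (P τ b (m+1))
      (∑ k ∈ Finset.Icc 1 (m+1),
        b ^ k * ((k : ℝ) * (t - ((k : ℝ) - 1) * τ) ^ (k - 1)) / (Nat.factorial k)) t := by
    exact hsum.const_add 1
  convert this using 1
  rw [sum_Icc_one, Finset.sum_range_succ']
  rw [P, sum_Icc_one, mul_add, mul_one, Finset.mul_sum]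
  have heq : ∀ i : ℕ, b * (b ^ (i+1) * (t - τ - (((i+1) : ℝ) - 1) * τ) ^ (i+1) / (Nat.factorial (i+1)))
      = b ^ (i+1+1) * (((i+1+1 : ℕ) : ℝ) * (t - (((i+1+1 : ℕ) : ℝ) - 1) * τ) ^ (i+1+1-1)) / (Nat.factorial (i+1+1)) := by
    intro i
    rw [Nat.factorial_succ (i+1)]
    have h1 : t - τ - (((i+1) : ℝ) - 1) * τ = t - (((i+1+1 : ℕ) : ℝ) - 1) * τ := by push_cast; ring
    have h2 : ((Nat.factorial (i+1)) : ℝ) ≠ 0 := by positivity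
    push_cast
    rw [h1]
    push_cast
    field_simp
    ring
  rw [Finset.sum_congr rfl (fun i _ => (heq i).symm)]
  norm_num [Nat.factorial]
  ring



lemma delayedExp_hasDerivAt {τ : ℝ} (b : ℝ) (hτ : 0 < τ) {x : ℝ} (hx : -τ < x) (hx0 : x ≠ 0) :
    HasDerivAt (delayedExp τ b) (b * delayedExp τ b (x - τ)) x := by
  rcases lt_or_gt_of_ne hx0 with hneg | hpos
  · -- -τ < x < 0 : locally constant 1
    have hev : delayedExp τ b =ᶠ[nhds x] fun _ => 1 := by
      filter_upwards [Ioo_mem_nhds hx hneg] with u hu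
      rw [delayedExp_eq_P hτ 0 (by push_cast; linarith [hu.1]) (by push_cast; linarith [hu.2]),
        P_zero]
    have h0 : delayedExp τ b (x - τ) = 0 := delayedExp_neg (by linarith)
    rw [h0, mul_zero]
    exact (hasDerivAt_const x (1:ℝ)).congr_of_eventuallyEq hev
  · -- x > 0
    have hn1 : 1 ≤ ⌈x / τ⌉₊ := by
      rw [Nat.one_le_ceil_iff]
      positivity
    obtain ⟨p, hp⟩ : ∃ p, ⌈x / τ⌉₊ = p + 1 := ⟨⌈x / τ⌉₊ - 1, by omega⟩
    have hub : x ≤ ((p:ℝ) + 1) * τ := by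
      have := Nat.le_ceil (x / τ)
      rw [hp] at this
      push_cast at this
      calc x = (x / τ) * τ := by field_simp
        _ ≤ ((p:ℝ) + 1) * τ := by nlinarith
    have hlb : (p : ℝ) * τ < x := by
      have : (p : ℕ) < ⌈x / τ⌉₊ := by omega
      rw [Nat.lt_ceil] at this
      calc (p:ℝ) * τ < (x / τ) * τ := by nlinarith
        _ = x := by field_simp
    rcases eq_or_lt_of_le hub with heq | hlt
    · -- knot point x = (p+1)τ
      have hxval : delayedExp τ b x = P τ b (p+1) x :=
        delayedExp_eq_P hτ (p+1) (by push_cast; nlinarith) (by push_cast; linarith)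
      have hxτ : x - τ = (p : ℝ) * τ := by rw [heq]; ring
      have hEshift : delayedExp τ b (x - τ) = P τ b p (x - τ) := by
        refine delayedExp_eq_P hτ p ?_ ?_
        · rw [hxτ]; nlinarith
        · rw [hxτ]
      have hleft : HasDerivWithinAt (delayedExp τ b) (b * delayedExp τ b (x - τ)) (Iic x) x := by
        rw [hEshift]
        refine ((P_hasDerivAt τ b p x).hasDerivWithinAt).congr_of_eventuallyEq ?_ hxval
        have hmem : Ioc ((p:ℝ) * τ) x ∈ nhdsWithin x (Iic x) := by
          rw [← Ioi_inter_Iic, inter_comm]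
          exact inter_mem_nhdsWithin _ (Ioi_mem_nhds hlb)
        filter_upwards [hmem] with u hu
        exact delayedExp_eq_P hτ (p+1) (by push_cast; linarith [hu.1]) (by push_cast; linarith [hu.2, heq])
      have hright : HasDerivWithinAt (delayedExp τ b) (b * delayedExp τ b (x - τ)) (Ici x) x := by
        have hval : b * delayedExp τ b (x - τ) = b * P τ b (p+1) (x - τ) := by
          rw [hEshift, hxτ, P_succ]
          simp
        rw [hval]
        refine ((P_hasDerivAt τ b (p+1) x).hasDerivWithinAt).congr_of_eventuallyEq ?_ ?_
        · have hmem : Ico x (((p:ℝ)+2) * τ) ∈ nhdsWithin x (Ici x) := by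
            rw [← Ici_inter_Iio]
            exact inter_mem_nhdsWithin _ (Iio_mem_nhds (show x < ((p:ℝ)+2)*τ by rw [heq]; nlinarith))
          filter_upwards [hmem] with u hu
          exact delayedExp_eq_P hτ (p+2) (by push_cast; linarith [hu.1, heq]) (by push_cast; linarith [hu.2])
        · rw [hxval, heq]
          have : P τ b (p+1+1) (((p:ℝ)+1)*τ) = P τ b (p+1) (((p:ℝ)+1)*τ) := by
            rw [P_succ]
            push_cast
            simp
          rw [← this]
      have := hleft.union hright
      rw [Iic_union_Ici] at this
      exact this.hasDerivAt (by simp)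
    · -- interior of a piece
      have hev : delayedExp τ b =ᶠ[nhds x] P τ b (p+1) := by
        filter_upwards [Ioo_mem_nhds hlb hlt] with u hu
        exact delayedExp_eq_P hτ (p+1) (by push_cast; linarith [hu.1]) (by push_cast; linarith [hu.2])
      have hEshift : delayedExp τ b (x - τ) = P τ b p (x - τ) := by
        refine delayedExp_eq_P hτ p (by push_cast; linarith) (by push_cast; linarith)
      rw [hEshift]
      exact (P_hasDerivAt τ b p x).congr_of_eventuallyEq hev

lemma delayedExp_continuousOn {τ : ℝ} (b : ℝ) (hτ : 0 < τ) :
    ContinuousOn (delayedExp τ b) (Ici (-τ)) := by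
  intro x hx
  rcases eq_or_lt_of_le (mem_Ici.mp hx) with heq | hlt
  · -- x = -τ
    subst heq
    have hmem : Ico (-τ) 0 ∈ nhdsWithin (-τ) (Ici (-τ)) := by
      rw [← Ici_inter_Iio]
      exact inter_mem_nhdsWithin _ (Iio_mem_nhds (by linarith))
    have hev : ∀ u ∈ Ico (-τ) 0, delayedExp τ b u = 1 := fun u hu => by
      rw [delayedExp_eq_P hτ 0 (by push_cast; linarith [hu.1]) (by push_cast; linarith [hu.2]), P_zero]
    refine ContinuousWithinAt.congr_of_eventuallyEq
      (continuousWithinAt_const : ContinuousWithinAt (fun _ => (1:ℝ)) _ _) ?_ ?_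
    · filter_upwards [hmem] with u hu using hev u hu
    · exact hev (-τ) ⟨le_refl _, by linarith⟩
  · rcases eq_or_ne x 0 with rfl | hx0
    · -- x = 0
      have hleft : ContinuousWithinAt (delayedExp τ b) (Iic 0) 0 := by
        refine ContinuousWithinAt.congr_of_eventuallyEq
          (continuousWithinAt_const : ContinuousWithinAt (fun _ => (1:ℝ)) _ _) ?_ ?_
        · have hmem : Ioc (-τ) 0 ∈ nhdsWithin (0:ℝ) (Iic 0) := by
            rw [← Ioi_inter_Iic, inter_comm]
            exact inter_mem_nhdsWithin _ (Ioi_mem_nhds (by linarith))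
          filter_upwards [hmem] with u hu
          rw [delayedExp_eq_P hτ 0 (by push_cast; linarith [hu.1]) (by push_cast; linarith [hu.2]), P_zero]
        · rw [delayedExp_eq_P hτ 0 (by push_cast; linarith) (by push_cast; simp), P_zero]
      have hright : ContinuousWithinAt (delayedExp τ b) (Ici 0) 0 := by
        refine ((P_hasDerivAt τ b 0 0).continuousAt.continuousWithinAt).congr_of_eventuallyEq ?_ ?_
        · have hmem : Ico (0:ℝ) τ ∈ nhdsWithin (0:ℝ) (Ici 0) := by
            rw [← Ici_inter_Iio]
            exact inter_mem_nhdsWithin _ (Iio_mem_nhds hτ)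
          filter_upwards [hmem] with u hu
          exact delayedExp_eq_P hτ 1 (by push_cast; linarith [hu.1]) (by push_cast; linarith [hu.2])
        · exact delayedExp_eq_P hτ 1 (by push_cast; linarith) (by push_cast; linarith)
      have := hleft.union hright
      rw [Iic_union_Ici] at this
      rw [continuousWithinAt_univ] at this
      exact this.continuousWithinAt
    · exact ((delayedExp_hasDerivAt b hτ hlt hx0).continuousAt).continuousWithinAt

end DEaux
open DEaux MeasureTheory

/-- The integration-by-parts identity for the history term in the explicit
representation formula of solutions to the delay ODE. -/
theorem delayedExp_integration_by_parts (τ a b : ℝ) (hτ : 0 < τ)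
    (φ φ' : ℝ → ℝ)
    (hφ : ∀ s ∈ Icc (-τ) (0 : ℝ), HasDerivAt φ (φ' s) s)
    (hφ' : ContinuousOn φ' (Icc (-τ) 0)) :
    ∀ t : ℝ, 0 ≤ t →
      Real.exp (a * (t + τ)) * delayedExp τ (b * Real.exp (-a * τ)) t * φ (-τ)
      + (∫ s in (-τ)..(0 : ℝ),
          Real.exp (a * (t - s)) * delayedExp τ (b * Real.exp (-a * τ)) (t - τ - s)
            * (φ' s - a * φ s))
      = Real.exp (a * t) * delayedExp τ (b * Real.exp (-a * τ)) (t - τ) * φ 0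
      + b * ∫ s in (-τ)..(0 : ℝ),
          Real.exp (a * (t - s - τ)) * delayedExp τ (b * Real.exp (-a * τ)) (t - 2 * τ - s)
            * φ s := by
  intro t ht
  set β : ℝ := b * Real.exp (-a * τ) with hβ
  have hEc : ContinuousOn (delayedExp τ β) (Ici (-τ)) := delayedExp_continuousOn β hτ
  set F : ℝ → ℝ := fun s => Real.exp (a * (t - s)) * delayedExp τ β (t - τ - s) * φ s with hF
  set G : ℝ → ℝ := fun s =>
      Real.exp (a * (t - s)) * delayedExp τ β (t - τ - s) * (φ' s - a * φ s)
      - β * (Real.exp (a * (t - s)) * delayedExp τ β (t - 2 * τ - s) * φ s) with hG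
  set H : ℝ → ℝ := fun s =>
      β * (Real.exp (a * (t - s)) * delayedExp τ β (t - 2 * τ - s) * φ s) with hH
  set c : ℝ := min (t - τ) 0 with hc
  have hc1 : -τ ≤ c := le_min (by linarith) (by linarith)
  have hc2 : c ≤ 0 := min_le_right _ _
  have hφc : ContinuousOn φ (Icc (-τ) 0) :=
    fun s hs => (hφ s hs).continuousAt.continuousWithinAt
  have hexp : Continuous fun s : ℝ => Real.exp (a * (t - s)) := by fun_prop
  have hE1 : ContinuousOn (fun s => delayedExp τ β (t - τ - s)) (Icc (-τ) 0) := by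
    apply hEc.comp (by fun_prop)
    intro s hs
    simp only [mem_Ici]
    have := hs.2
    simp only [mem_Icc] at hs
    linarith [hs.2]
  have hFc : ContinuousOn F (Icc (-τ) 0) := (hexp.continuousOn.mul hE1).mul hφc
  -- derivative of F
  have key : ∀ s ∈ Ioo (-τ) (0 : ℝ), s ≠ t - τ → HasDerivAt F (G s) s := by
    intro s hs hsne
    have hx : -τ < t - τ - s := by linarith [hs.2]
    have hx0 : t - τ - s ≠ 0 := fun h => hsne (by linarith)
    have hinner : HasDerivAt (fun s : ℝ => t - τ - s) (-1) s := by
      simpa using (hasDerivAt_id s).const_sub (t - τ)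
    have hEd : HasDerivAt (fun s : ℝ => delayedExp τ β (t - τ - s))
        (-(β * delayedExp τ β (t - 2 * τ - s))) s := by
      have h1 := (delayedExp_hasDerivAt β hτ hx hx0).comp s hinner
      have harg : t - τ - s - τ = t - 2 * τ - s := by ring
      rw [harg] at h1
      exact h1.congr_deriv (by ring)
    have hexpd : HasDerivAt (fun s : ℝ => Real.exp (a * (t - s)))
        (-a * Real.exp (a * (t - s))) s := by
      have hin : HasDerivAt (fun s : ℝ => a * (t - s)) (-a) s := by
        simpa using ((hasDerivAt_id s).const_sub t).const_mul a
      exact ((Real.hasDerivAt_exp (a * (t - s))).comp s hin).congr_deriv (by ring : Real.exp (a * (t - s)) * -a = -a * Real.exp (a * (t - s)))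
    have hφd := hφ s (Ioo_subset_Icc_self hs)
    have hprod := (hexpd.mul hEd).mul hφd
    refine HasDerivAt.congr_deriv hprod ?_
    simp only [hG, Pi.mul_apply]
    ring
  -- integrability
  have hInt1 : IntervalIntegrable
      (fun s => Real.exp (a * (t - s)) * delayedExp τ β (t - τ - s) * (φ' s - a * φ s))
      volume (-τ) 0 := by
    apply ContinuousOn.intervalIntegrable
    rw [uIcc_of_le (by linarith)]
    exact (hexp.continuousOn.mul hE1).mul (hφ'.sub (continuousOn_const.mul hφc))
  have hH1 : IntervalIntegrable H volume (-τ) c := by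
    apply ContinuousOn.intervalIntegrable
    rw [uIcc_of_le hc1]
    apply ContinuousOn.mul continuousOn_const
    apply ContinuousOn.mul (ContinuousOn.mul hexp.continuousOn _)
      (hφc.mono (Icc_subset_Icc le_rfl hc2))
    apply hEc.comp (by fun_prop)
    intro s hs
    simp only [mem_Icc] at hs
    simp only [mem_Ici]
    have hsc : s ≤ t - τ := le_trans hs.2 (min_le_left _ _)
    linarith
  have hH2 : IntervalIntegrable H volume c 0 := by
    rw [intervalIntegrable_iff_integrableOn_Ioc_of_le hc2]
    have hzero : EqOn (fun _ : ℝ => (0:ℝ)) H (Ioc c 0) := by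
      intro s hs
      have hst : t - τ < s := by
        rcases min_lt_iff.mp hs.1 with h | h
        · exact h
        · exact absurd hs.2 (not_le.mpr h)
      simp only [hH]
      rw [delayedExp_neg (by linarith : t - 2*τ - s < -τ)]
      simp
    exact (integrableOn_zero).congr_fun hzero measurableSet_Ioc
  have hHint : IntervalIntegrable H volume (-τ) 0 := hH1.trans hH2
  have hsub1 : uIcc (-τ) c ⊆ uIcc (-τ) (0:ℝ) := by
    rw [uIcc_of_le hc1, uIcc_of_le (show (-τ:ℝ) ≤ 0 by linarith)]
    exact Icc_subset_Icc le_rfl hc2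
  have hsub2 : uIcc c (0:ℝ) ⊆ uIcc (-τ) (0:ℝ) := by
    rw [uIcc_of_le hc2, uIcc_of_le (show (-τ:ℝ) ≤ 0 by linarith)]
    exact Icc_subset_Icc hc1 le_rfl
  have hG1 : IntervalIntegrable G volume (-τ) c := (hInt1.mono_set hsub1).sub hH1
  have hG2 : IntervalIntegrable G volume c 0 := (hInt1.mono_set hsub2).sub hH2
  -- FTC on the two pieces
  have ftc1 : ∫ s in (-τ)..c, G s = F c - F (-τ) := by
    apply intervalIntegral.integral_eq_sub_of_hasDerivAt_of_le hc1
      (hFc.mono (Icc_subset_Icc le_rfl hc2)) _ hG1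
    intro s hs
    refine key s ⟨hs.1, lt_of_lt_of_le hs.2 hc2⟩ ?_
    have : s < t - τ := lt_of_lt_of_le hs.2 (min_le_left _ _)
    exact this.ne
  have ftc2 : ∫ s in c..(0:ℝ), G s = F 0 - F c := by
    apply intervalIntegral.integral_eq_sub_of_hasDerivAt_of_le hc2
      (hFc.mono (Icc_subset_Icc hc1 le_rfl)) _ hG2
    intro s hs
    refine key s ⟨lt_of_le_of_lt hc1 hs.1, hs.2⟩ ?_
    rcases le_total (t - τ) 0 with h | h
    · have : c = t - τ := min_eq_left h
      rw [← this]
      exact (hs.1).ne'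
    · exact (lt_of_lt_of_le hs.2 h).ne
  have hsplit : ∫ s in (-τ)..(0:ℝ), G s = F 0 - F (-τ) := by
    rw [← intervalIntegral.integral_add_adjacent_intervals hG1 hG2, ftc1, ftc2]
    ring
  have hGsub : ∫ s in (-τ)..(0:ℝ), G s =
      (∫ s in (-τ)..(0:ℝ),
        Real.exp (a * (t - s)) * delayedExp τ β (t - τ - s) * (φ' s - a * φ s))
      - ∫ s in (-τ)..(0:ℝ), H s := by
    rw [← intervalIntegral.integral_sub hInt1 hHint]
  -- rewrite endpoint values
  have hFneg : F (-τ) = Real.exp (a * (t + τ)) * delayedExp τ β t * φ (-τ) := by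
    simp only [hF]
    norm_num
  have hF0 : F 0 = Real.exp (a * t) * delayedExp τ β (t - τ) * φ 0 := by
    simp only [hF]
    norm_num
  -- rewrite b * second integral as ∫ H
  have hbH : b * (∫ s in (-τ)..(0:ℝ),
      Real.exp (a * (t - s - τ)) * delayedExp τ β (t - 2 * τ - s) * φ s)
      = ∫ s in (-τ)..(0:ℝ), H s := by
    rw [← intervalIntegral.integral_const_mul]
    apply intervalIntegral.integral_congr
    intro s _
    simp only [hH, hβ]
    rw [show a * (t - s - τ) = -a * τ + a * (t - s) by ring, Real.exp_add]
    ring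
  rw [← hFneg, ← hF0, hbH]
  have := hGsub.symm.trans hsplit
  linarith [this]
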